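/- For the same system, L_g L_f² h(x) = T_sup·√(p_sup − p_L − α·p_lp)·ω²·K, which is nonzero whenever T_sup ≠ 0, K ≠ 0, ω ≠ 0, and p_sup − p_L − α·p_lp > 0; consequently the relative degree of the output p_sup is 3. -/

import Mathlib

section Aux

variable (α p_lp : ℝ)

noncomputable def pr (i : Fin 4) : (Fin 4 → ℝ) →L[ℝ] ℝ :=
  ContinuousLinearMap.proj i

lemma hasF_u (x : Fin 4 → ℝ) :
    HasFDerivAt (fun x : Fin 4 → ℝ => x 1 - x 0 - α * p_lp)
      (pr 1 - pr 0) x := by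
  have h1 : HasFDerivAt (fun x : Fin 4 → ℝ => x 1) (pr 1) x :=
    (pr 1).hasFDerivAt
  have h0 : HasFDerivAt (fun x : Fin 4 → ℝ => x 0) (pr 0) x :=
    (pr 0).hasFDerivAt
  simpa using (h1.sub h0).sub_const (α * p_lp)

end Aux

theorem stmt4 (T_L T_sup D ω K α p_lp : ℝ)
    (h : (Fin 4 → ℝ) → ℝ) (hh : h = fun x => x 1)
    (Lfh : (Fin 4 → ℝ) → ℝ)
    (hLfh : Lfh = fun x => T_sup * x 3 * Real.sqrt (x 1 - x 0 - α * p_lp))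
    (Lf2h : (Fin 4 → ℝ) → ℝ)
    (hLf2h : Lf2h = fun x => (1/2) * T_sup * (T_sup - T_L) * (x 3)^2
          + T_sup * x 2 * Real.sqrt (x 1 - x 0 - α * p_lp))
    (g : Fin 4 → ℝ) (hg : g = ![0, 0, ω^2 * K, 0]) :
    ∀ x : Fin 4 → ℝ, x 1 - x 0 - α * p_lp > 0 →
      fderiv ℝ Lf2h x g = T_sup * Real.sqrt (x 1 - x 0 - α * p_lp) * ω^2 * K ∧
      (T_sup ≠ 0 → K ≠ 0 → ω ≠ 0 →
        -- relative degree 3: L_g h = 0, L_g L_f h = 0, L_g L_f² h ≠ 0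
        fderiv ℝ h x g = 0 ∧ fderiv ℝ Lfh x g = 0 ∧ fderiv ℝ Lf2h x g ≠ 0) := by
  intro x hx
  have hune : x 1 - x 0 - α * p_lp ≠ 0 := ne_of_gt hx
  have hg0 : g 0 = 0 := by simp [hg]
  have hg1 : g 1 = 0 := by simp [hg]
  have hg2 : g 2 = ω ^ 2 * K := by simp [hg]
  have hg3 : g 3 = 0 := by simp [hg]
  have h0 : HasFDerivAt (fun x : Fin 4 → ℝ => x 0) (pr 0) x :=
    (pr 0).hasFDerivAt
  have h1 : HasFDerivAt (fun x : Fin 4 → ℝ => x 1) (pr 1) x :=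
    (pr 1).hasFDerivAt
  have h2 : HasFDerivAt (fun x : Fin 4 → ℝ => x 2) (pr 2) x :=
    (pr 2).hasFDerivAt
  have h3 : HasFDerivAt (fun x : Fin 4 → ℝ => x 3) (pr 3) x :=
    (pr 3).hasFDerivAt
  have hu := hasF_u α p_lp x
  have hsqrt := hu.sqrt hune
  subst hh hLfh hLf2h hg
  -- Lf2h derivative
  have hpow : HasFDerivAt (fun x : Fin 4 → ℝ => (x 3)^2) ((x 3) • pr 3 + (x 3) • pr 3) x := by
    simp only [pow_two]; exact h3.mul h3
  have hA := hpow.const_mul ((1/2) * T_sup * (T_sup - T_L))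
  have hB := (h2.const_mul T_sup).mul hsqrt
  have hT := hA.add hB
  have key : fderiv ℝ (fun x : Fin 4 → ℝ => (1/2) * T_sup * (T_sup - T_L) * (x 3)^2
          + T_sup * x 2 * Real.sqrt (x 1 - x 0 - α * p_lp)) x ![0, 0, ω^2 * K, 0]
      = T_sup * Real.sqrt (x 1 - x 0 - α * p_lp) * ω ^ 2 * K := by
    rw [HasFDerivAt.fderiv (f := fun x : Fin 4 → ℝ => (1/2) * T_sup * (T_sup - T_L) * (x 3)^2
            + T_sup * x 2 * Real.sqrt (x 1 - x 0 - α * p_lp)) hT]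
    simp [pr]
    ring
  refine ⟨key, fun hT0 hK hω => ?_⟩
  have hhd : fderiv ℝ (fun x : Fin 4 → ℝ => x 1) x ![0, 0, ω^2 * K, 0] = 0 := by
    rw [h1.fderiv]; simp [pr]
  have hLfh' := (h3.const_mul T_sup).mul hsqrt
  have hLfd : fderiv ℝ (fun x : Fin 4 → ℝ => T_sup * x 3 * Real.sqrt (x 1 - x 0 - α * p_lp)) x
      ![0, 0, ω^2 * K, 0] = 0 := by
    rw [HasFDerivAt.fderiv (f := fun x : Fin 4 → ℝ => T_sup * x 3 * Real.sqrt (x 1 - x 0 - α * p_lp)) hLfh']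
    simp [pr]
  refine ⟨hhd, hLfd, ?_⟩
  rw [key]
  have hs : Real.sqrt (x 1 - x 0 - α * p_lp) > 0 := Real.sqrt_pos.mpr hx
  positivity
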